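/- arXiv:math/0503203 — 3 statements merged into one kernel-verified Lean document; each statement's English description precedes it below -/
import Mathlib

section
/- Let v be a splitting vertex of G with N(v) = {v_1,…,v_d}, and set J = (vv_1, vv_2, …, vv_d) and K = I(G∖{v}). Then I(G) = J + K is a splitting of I(G); in particular, I(G) is splittable. -/
open MvPolynomial

variable {V : Type*}

/-- The graph obtained from `G` by deleting the vertices in `S`
(and all edges incident to them). -/
def delVerts (G : SimpleGraph V) (S : Set V) : SimpleGraph V where
  Adj x y := G.Adj x y ∧ x ∉ S ∧ y ∉ S
  symm := ⟨fun _ _ h => ⟨h.1.symm, h.2.2, h.2.1⟩⟩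
  loopless := ⟨fun x h => G.loopless.irrefl x h.1⟩

/-- The edge ideal of a simple graph `G`. -/
noncomputable def edgeIdeal (k : Type*) [Field k] (G : SimpleGraph V) :
    Ideal (MvPolynomial V k) :=
  Ideal.span {m | ∃ x y, G.Adj x y ∧ m = X x * X y}

/-- A (monic) monomial in a multivariate polynomial ring. -/
def IsMonomial {k : Type*} [Field k] (m : MvPolynomial V k) : Prop :=
  ∃ s : V →₀ ℕ, m = monomial s 1

/-- A monomial ideal: an ideal generated by a set of (monic) monomials. -/
def IsMonomialIdeal {k : Type*} [Field k] (I : Ideal (MvPolynomial V k)) : Prop :=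
  ∃ S : Set (MvPolynomial V k), (∀ m ∈ S, IsMonomial m) ∧ I = Ideal.span S

/-- The set of minimal (monic) monomial generators of a monomial ideal `I`. -/
def minGens {k : Type*} [Field k] (I : Ideal (MvPolynomial V k)) :
    Set (MvPolynomial V k) :=
  {m | IsMonomial m ∧ m ∈ I ∧
    ∀ m' : MvPolynomial V k, IsMonomial m' → m' ∣ m → m' ≠ m → m' ∉ I}

/-- `L` is the (monic) least common multiple of the set of monomials `S`. -/
def IsLcmOf {k : Type*} [Field k] (S : Set (MvPolynomial V k))
    (L : MvPolynomial V k) : Prop :=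
  IsMonomial L ∧ (∀ m ∈ S, m ∣ L) ∧
    ∀ L' : MvPolynomial V k, IsMonomial L' → (∀ m ∈ S, m ∣ L') → L ∣ L'

/-- Eliahou–Kervaire splitting of a monomial ideal. -/
def IsSplitting {k : Type*} [Field k] (I J K : Ideal (MvPolynomial V k)) : Prop :=
  IsMonomialIdeal J ∧ IsMonomialIdeal K ∧ J ≠ ⊥ ∧ K ≠ ⊥ ∧ I = J + K ∧
  minGens I = minGens J ∪ minGens K ∧ Disjoint (minGens J) (minGens K) ∧
  ∃ φ ψ : MvPolynomial V k → MvPolynomial V k,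
    (∀ w ∈ minGens (J ⊓ K), φ w ∈ minGens J ∧ ψ w ∈ minGens K ∧
        IsLcmOf {φ w, ψ w} w) ∧
    (∀ S ⊆ minGens (J ⊓ K), S.Nonempty →
      ∀ L Lφ Lψ : MvPolynomial V k, IsLcmOf S L → IsLcmOf (φ '' S) Lφ →
        IsLcmOf (ψ '' S) Lψ → (Lφ ∣ L ∧ Lφ ≠ L) ∧ (Lψ ∣ L ∧ Lψ ≠ L))

namespace EK

variable {k : Type*} [Field k]

/-- The exponent vector of the edge monomial `X x * X y`. -/
noncomputable def ee (x y : V) : V →₀ ℕ := Finsupp.single x 1 + Finsupp.single y 1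

lemma ee_comm (x y : V) : ee x y = ee y x := add_comm _ _

lemma ee_apply [DecidableEq V] (x y z : V) :
    ee x y z = (if x = z then 1 else 0) + (if y = z then 1 else 0) := by
  simp [ee, Finsupp.single_apply]

lemma X_mul_X (x y : V) : (X x * X y : MvPolynomial V k) = monomial (ee x y) 1 := by
  rw [X, X, monomial_mul, one_mul]; rfl

lemma mono_dvd {s t : V →₀ ℕ} : (monomial s (1:k)) ∣ monomial t 1 ↔ s ≤ t := by
  rw [monomial_dvd_monomial]; simp

lemma mono_inj {s t : V →₀ ℕ} (h : (monomial s (1:k)) = monomial t 1) : s = t :=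
  monomial_left_injective one_ne_zero h

lemma mono_ne_zero (s : V →₀ ℕ) : (monomial s (1:k)) ≠ 0 := by
  simp [monomial_eq_zero]

lemma mono_mem_span {T : Set (V →₀ ℕ)} {s : V →₀ ℕ} :
    monomial s (1:k) ∈ Ideal.span ((fun t => monomial t (1:k)) '' T) ↔ ∃ t ∈ T, t ≤ s := by
  rw [mem_ideal_span_monomial_image]
  classical
  simp [support_monomial]

lemma minGens_eq {I : Ideal (MvPolynomial V k)} {P : (V →₀ ℕ) → Prop}
    (hmem : ∀ s, monomial s (1:k) ∈ I ↔ P s) :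
    minGens I = (fun s => monomial s (1:k)) '' {s | P s ∧ ∀ t, t ≤ s → P t → t = s} := by
  ext m
  constructor
  · rintro ⟨⟨s, rfl⟩, hmI, hmin⟩
    refine ⟨s, ⟨(hmem s).1 hmI, ?_⟩, rfl⟩
    intro t ht hPt
    by_contra hne
    exact hmin (monomial t 1) ⟨t, rfl⟩ (mono_dvd.2 ht)
      (fun h => hne (mono_inj h)) ((hmem t).2 hPt)
  · rintro ⟨s, ⟨hPs, hmin⟩, rfl⟩
    refine ⟨⟨s, rfl⟩, (hmem s).2 hPs, ?_⟩
    rintro m' ⟨t, rfl⟩ hdvd hne hm'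
    exact hne (congrArg (fun u => monomial u (1:k)) (hmin t (mono_dvd.1 hdvd) ((hmem t).1 hm')))

lemma min_upper_antichain {T : Set (V →₀ ℕ)} (hT : ∀ s ∈ T, ∀ t ∈ T, s ≤ t → s = t) :
    {s | (∃ t ∈ T, t ≤ s) ∧ ∀ t, t ≤ s → (∃ u ∈ T, u ≤ t) → t = s} = T := by
  ext s; constructor
  · rintro ⟨⟨t, htT, hts⟩, hmin⟩
    have h := hmin t hts ⟨t, htT, le_rfl⟩
    exact h ▸ htT
  · intro hs
    refine ⟨⟨s, hs, le_rfl⟩, ?_⟩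
    rintro t hts ⟨u, huT, hut⟩
    have h : u = s := hT u huT s hs (hut.trans hts)
    exact le_antisymm hts (h ▸ hut)

lemma minGens_span_antichain {T : Set (V →₀ ℕ)} (hT : ∀ s ∈ T, ∀ t ∈ T, s ≤ t → s = t) :
    minGens (Ideal.span ((fun t => monomial t (1:k)) '' T))
      = (fun t => monomial t (1:k)) '' T := by
  rw [minGens_eq (fun s => mono_mem_span), min_upper_antichain hT]

/-- The set of edge exponent vectors of a graph. -/
def DE (G : SimpleGraph V) : Set (V →₀ ℕ) := {s | ∃ x y, G.Adj x y ∧ s = ee x y}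

lemma edgeIdeal_eq (G : SimpleGraph V) :
    edgeIdeal k G = Ideal.span ((fun t => monomial t (1:k)) '' DE G) := by
  unfold edgeIdeal; congr 1; ext m
  constructor
  · rintro ⟨x, y, hadj, rfl⟩; exact ⟨ee x y, ⟨x, y, hadj, rfl⟩, (X_mul_X x y).symm⟩
  · rintro ⟨s, ⟨x, y, hadj, rfl⟩, rfl⟩; exact ⟨x, y, hadj, (X_mul_X x y).symm⟩

lemma J_eq (G : SimpleGraph V) (v : V) :
    Ideal.span ((fun w => (X v * X w : MvPolynomial V k)) '' G.neighborSet v)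
      = Ideal.span ((fun t => monomial t (1:k)) '' ((ee v) '' (G.neighborSet v))) := by
  congr 1
  rw [← Set.image_comp]
  exact Set.image_congr (fun w _ => X_mul_X v w)

lemma one_le_ee_iff [DecidableEq V] {a b z : V} : 1 ≤ ee a b z ↔ a = z ∨ b = z := by
  rw [ee_apply]
  constructor
  · intro h; by_contra hc; push_neg at hc
    rw [if_neg hc.1, if_neg hc.2] at h; omega
  · rintro (rfl | rfl)
    · rw [if_pos rfl]; omega
    · rw [if_pos rfl]; exact le_add_self

lemma ee_apply_eq_zero [DecidableEq V] {a b z : V} (ha : a ≠ z) (hb : b ≠ z) :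
    ee a b z = 0 := by
  rw [ee_apply, if_neg ha, if_neg hb]

lemma ee_le_iff [DecidableEq V] {x y : V} (hxy : x ≠ y) {s : V →₀ ℕ} :
    ee x y ≤ s ↔ 1 ≤ s x ∧ 1 ≤ s y := by
  rw [Finsupp.le_def]
  constructor
  · intro h
    exact ⟨le_trans (one_le_ee_iff.2 (Or.inl rfl)) (h x),
      le_trans (one_le_ee_iff.2 (Or.inr rfl)) (h y)⟩
  · rintro ⟨h1, h2⟩ z
    rw [ee_apply]
    by_cases hx : x = z
    · subst hx
      rw [if_pos rfl, if_neg (fun h : y = x => hxy h.symm)]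
      omega
    · rw [if_neg hx]
      by_cases hy : y = z
      · subst hy; rw [if_pos rfl]; omega
      · rw [if_neg hy]; omega

lemma antichain_DE (G : SimpleGraph V) :
    ∀ s ∈ DE G, ∀ t ∈ DE G, s ≤ t → s = t := by
  classical
  rintro _ ⟨x, y, hxy, rfl⟩ _ ⟨a, b, hab, rfl⟩ h
  have hx : a = x ∨ b = x :=
    one_le_ee_iff.1 (le_trans (one_le_ee_iff.2 (Or.inl rfl)) (h x))
  have hy : a = y ∨ b = y :=
    one_le_ee_iff.1 (le_trans (one_le_ee_iff.2 (Or.inr rfl)) (h y))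
  have hxyne : x ≠ y := hxy.ne
  rcases hx with h1 | h1
  · rcases hy with h2 | h2
    · exact absurd (h1.symm.trans h2) hxyne
    · rw [← h1, ← h2]
  · rcases hy with h2 | h2
    · rw [← h1, ← h2, ee_comm]
    · exact absurd (h1.symm.trans h2) hxyne

lemma antichain_NE (G : SimpleGraph V) (v : V) :
    ∀ s ∈ (ee v) '' (G.neighborSet v), ∀ t ∈ (ee v) '' (G.neighborSet v), s ≤ t → s = t := by
  classical
  rintro _ ⟨w, hw, rfl⟩ _ ⟨w', hw', rfl⟩ h
  have hvw : v ≠ w := G.ne_of_adj hw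
  rcases one_le_ee_iff.1 (le_trans (one_le_ee_iff.2 (Or.inr rfl)) (h w)) with h1 | h1
  · exact absurd h1 hvw
  · rw [h1]


lemma DE_union (G : SimpleGraph V) (v : V) :
    DE G = (ee v) '' (G.neighborSet v) ∪ DE (delVerts G {v}) := by
  ext s
  constructor
  · rintro ⟨x, y, hadj, rfl⟩
    by_cases hx : x = v
    · subst hx; exact Or.inl ⟨y, hadj, rfl⟩
    · by_cases hy : y = v
      · exact Or.inl ⟨x, (hy ▸ hadj).symm, by rw [hy]; exact ee_comm v x⟩
      · exact Or.inr ⟨x, y, ⟨hadj, hx, hy⟩, rfl⟩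
  · rintro (⟨w, hw, rfl⟩ | ⟨x, y, hadj, rfl⟩)
    · exact ⟨v, w, hw, rfl⟩
    · exact ⟨x, y, hadj.1, rfl⟩

lemma sup_edge_eq [DecidableEq V] {v b c y : V} (hbv : b ≠ v) (hcv : c ≠ v)
    (hy : y = b ∨ y = c) :
    ee v y ⊔ ee b c = Finsupp.single v 1 + ee b c := by
  have hyv : y ≠ v := by rcases hy with rfl | rfl
                         · exact hbv
                         · exact hcv
  ext z
  rw [Finsupp.sup_apply, Finsupp.add_apply, ee_apply, ee_apply, Finsupp.single_apply]
  by_cases hzv : v = z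
  · subst hzv
    rw [if_pos rfl, if_neg (fun h : y = v => hyv h),
      if_neg (fun h : b = v => hbv h), if_neg (fun h : c = v => hcv h)]
    decide
  · rw [if_neg hzv, zero_add, zero_add]
    refine sup_eq_right.2 ?_
    rcases hy with rfl | rfl
    · split_ifs <;> omega
    · split_ifs <;> omega

lemma one_le_of_sup_left {e f s : V →₀ ℕ} (h : e ⊔ f = s) {z : V} (hz : 1 ≤ e z) :
    1 ≤ s z :=
  le_trans hz (le_trans ((le_sup_left : e ≤ e ⊔ f) z) (h.le z))

lemma one_le_of_sup_right {e f s : V →₀ ℕ} (h : e ⊔ f = s) {z : V} (hz : 1 ≤ f z) :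
    1 ≤ s z :=
  le_trans hz (le_trans ((le_sup_right : f ≤ e ⊔ f) z) (h.le z))

open Classical in
noncomputable def expOf (m : MvPolynomial V k) : V →₀ ℕ :=
  if h : IsMonomial m then h.choose else 0

lemma expOf_monomial (s : V →₀ ℕ) : expOf (monomial s (1:k)) = s := by
  have h : IsMonomial (monomial s (1:k)) := ⟨s, rfl⟩
  rw [expOf, dif_pos h]
  exact (mono_inj h.choose_spec).symm

end EK

/-- if `v` is a splitting vertex of `G` (i.e. `deg v > 0` and
`G \ {v}` has at least one edge), `J = (v v₁, …, v v_d)` with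
`N(v) = {v₁, …, v_d}`, and `K = I(G \ {v})`, then `I(G) = J + K` is a
splitting of `I(G)`. -/
theorem stmt3 (k : Type*) [Field k] [Fintype V] [DecidableEq V]
    (G : SimpleGraph V) (v : V)
    (hdeg : (G.neighborSet v).Nonempty)
    (hsplit : ∃ x y, (delVerts G {v}).Adj x y) :
    IsSplitting (edgeIdeal k G)
      (Ideal.span ((fun w => (X v * X w : MvPolynomial V k)) '' G.neighborSet v))
      (edgeIdeal k (delVerts G {v})) := by
  classical
  obtain ⟨w0', hw0'⟩ := hdeg
  obtain ⟨x0, y0, hxy0⟩ := hsplit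
  set G' : SimpleGraph V := delVerts G {v} with hG'
  set J : Ideal (MvPolynomial V k) :=
    Ideal.span ((fun w => (X v * X w : MvPolynomial V k)) '' G.neighborSet v) with hJdef
  set K : Ideal (MvPolynomial V k) := edgeIdeal k G' with hKdef
  have hne_v : ∀ {b c : V}, G'.Adj b c → b ≠ v ∧ c ≠ v := by
    intro b c h
    exact ⟨fun hh => h.2.1 (by rw [hh]; exact Set.mem_singleton _),
           fun hh => h.2.2 (by rw [hh]; exact Set.mem_singleton _)⟩
  have hmJ : minGens J = (fun t => monomial t (1:k)) '' ((EK.ee v) '' (G.neighborSet v)) := by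
    rw [hJdef, EK.J_eq G v]
    exact EK.minGens_span_antichain (EK.antichain_NE G v)
  have hmK : minGens K = (fun t => monomial t (1:k)) '' (EK.DE G') := by
    rw [hKdef, EK.edgeIdeal_eq G']
    exact EK.minGens_span_antichain (EK.antichain_DE G')
  have hmI : minGens (edgeIdeal k G) = (fun t => monomial t (1:k)) '' (EK.DE G) := by
    rw [EK.edgeIdeal_eq G]
    exact EK.minGens_span_antichain (EK.antichain_DE G)
  -- membership predicates
  set PJ : (V →₀ ℕ) → Prop := fun s => ∃ w ∈ G.neighborSet v, EK.ee v w ≤ s with hPJ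
  set PK : (V →₀ ℕ) → Prop := fun s => ∃ t ∈ EK.DE G', t ≤ s with hPK
  have memJ : ∀ s, monomial s (1:k) ∈ J ↔ PJ s := by
    intro s
    rw [hJdef, EK.J_eq G v, EK.mono_mem_span]
    constructor
    · rintro ⟨t, ⟨w, hw, rfl⟩, hts⟩; exact ⟨w, hw, hts⟩
    · rintro ⟨w, hw, hts⟩; exact ⟨EK.ee v w, ⟨w, hw, rfl⟩, hts⟩
  have memK : ∀ s, monomial s (1:k) ∈ K ↔ PK s := by
    intro s
    rw [hKdef, EK.edgeIdeal_eq G', EK.mono_mem_span]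
  have memJK : ∀ s, monomial s (1:k) ∈ J ⊓ K ↔ (PJ s ∧ PK s) := by
    intro s
    rw [Submodule.mem_inf, memJ, memK]
  set Pm : (V →₀ ℕ) → Prop :=
    fun s => (PJ s ∧ PK s) ∧ ∀ t, t ≤ s → (PJ t ∧ PK t) → t = s with hPm
  have hmJK : minGens (J ⊓ K) = (fun s => monomial s (1:k)) '' {s | Pm s} :=
    EK.minGens_eq memJK
  -- index function
  set idx : V → ℕ := fun x => (Fintype.equivFin V x : ℕ) with hidx
  have idx_inj : Function.Injective idx := by
    intro a b h
    exact (Fintype.equivFin V).injective (Fin.val_injective h)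
  -- valid choices
  set Q : (V →₀ ℕ) → V → Prop :=
    fun s a => a ∈ G.neighborSet v ∧ ∃ b c, G'.Adj b c ∧ EK.ee v a ⊔ EK.ee b c = s with hQ
  have fact1 : ∀ s, Pm s → ∃ a, Q s a := by
    rintro s ⟨⟨⟨a, ha, has⟩, ⟨t, ⟨b, c, hbc, rfl⟩, hts⟩⟩, hmin⟩
    refine ⟨a, ha, b, c, hbc, ?_⟩
    exact hmin _ (sup_le has hts)
      ⟨⟨a, ha, le_sup_left⟩, ⟨EK.ee b c, ⟨b, c, hbc, rfl⟩, le_sup_right⟩⟩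
  have fact2 : ∀ s, Pm s → ∀ a b c, a ∈ G.neighborSet v → G'.Adj b c →
      EK.ee v a ⊔ EK.ee b c = s → b ≠ a → c ≠ a → b ∉ G.neighborSet v := by
    rintro s ⟨-, hmin⟩ a b c ha hbc hsup hba hca hbN
    have hav : a ≠ v := (G.ne_of_adj ha).symm
    have hbv : b ≠ v := (hne_v hbc).1
    have hsb : 1 ≤ s b := EK.one_le_of_sup_right hsup (EK.one_le_ee_iff.2 (Or.inl rfl))
    have hsv : 1 ≤ s v := EK.one_le_of_sup_left hsup (EK.one_le_ee_iff.2 (Or.inl rfl))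
    have hs' : EK.ee v b ⊔ EK.ee b c ≤ s :=
      sup_le ((EK.ee_le_iff (fun h => hbv h.symm)).2 ⟨hsv, hsb⟩) (le_trans le_sup_right hsup.le)
    have heq := hmin _ hs'
      ⟨⟨b, hbN, le_sup_left⟩, ⟨EK.ee b c, ⟨b, c, hbc, rfl⟩, le_sup_right⟩⟩
    have h1 : 1 ≤ s a := EK.one_le_of_sup_left hsup (EK.one_le_ee_iff.2 (Or.inr rfl))
    have h0 : (EK.ee v b ⊔ EK.ee b c) a = 0 := by
      rw [Finsupp.sup_apply, EK.ee_apply_eq_zero hav.symm hba, EK.ee_apply_eq_zero hba hca]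
      decide
    rw [heq] at h0
    omega
  -- the choice function
  have hfun : ∀ s : V →₀ ℕ, ∃ p : V × V × V, Pm s →
      Q s p.1 ∧ G'.Adj p.2.1 p.2.2 ∧ EK.ee v p.1 ⊔ EK.ee p.2.1 p.2.2 = s ∧
        ∀ a', Q s a' → idx p.1 ≤ idx a' := by
    intro s
    by_cases hs : Pm s
    · obtain ⟨a0, ha0⟩ := fact1 s hs
      obtain ⟨a, haQ, hamin⟩ := Set.exists_min_image {a | Q s a} idx (Set.toFinite _) ⟨a0, ha0⟩
      obtain ⟨b, c, hbc, hsup⟩ := haQ.2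
      exact ⟨(a, b, c), fun _ => ⟨haQ, hbc, hsup, fun a' ha' => hamin a' ha'⟩⟩
    · exact ⟨(v, v, v), fun h => absurd h hs⟩
  choose pick hpick using hfun
  set φf : MvPolynomial V k → MvPolynomial V k :=
    fun m => monomial (EK.ee v (pick (EK.expOf m)).1) 1 with hφf
  set ψf : MvPolynomial V k → MvPolynomial V k :=
    fun m => monomial (EK.ee (pick (EK.expOf m)).2.1 (pick (EK.expOf m)).2.2) 1 with hψf
  refine ⟨?_, ?_, ?_, ?_, ?_, ?_, ?_, φf, ψf, ?_, ?_⟩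
  -- 1. J monomial ideal
  · refine ⟨_, ?_, hJdef⟩
    rintro m ⟨w, hw, rfl⟩
    exact ⟨EK.ee v w, EK.X_mul_X v w⟩
  -- 2. K monomial ideal
  · refine ⟨{m | ∃ x y, G'.Adj x y ∧ m = X x * X y}, ?_, hKdef⟩
    rintro m ⟨x, y, h, rfl⟩
    exact ⟨EK.ee x y, EK.X_mul_X x y⟩
  -- 3. J ≠ ⊥
  · intro h
    have hmem : (X v * X w0' : MvPolynomial V k) ∈ J := Ideal.subset_span ⟨w0', hw0', rfl⟩
    rw [h, Ideal.mem_bot] at hmem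
    rw [EK.X_mul_X v w0'] at hmem
    exact EK.mono_ne_zero (EK.ee v w0') hmem
  -- 4. K ≠ ⊥
  · intro h
    have hmem : (X x0 * X y0 : MvPolynomial V k) ∈ K := Ideal.subset_span ⟨x0, y0, hxy0, rfl⟩
    rw [h, Ideal.mem_bot] at hmem
    rw [EK.X_mul_X x0 y0] at hmem
    exact EK.mono_ne_zero (EK.ee x0 y0) hmem
  -- 5. I = J + K
  · rw [hJdef, hKdef, EK.edgeIdeal_eq G, EK.J_eq G v, EK.edgeIdeal_eq G',
      EK.DE_union G v, ← hG', Set.image_union, Ideal.span_union, Submodule.add_eq_sup]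
  -- 6. minGens union
  · rw [hmI, hmJ, hmK, EK.DE_union G v, ← hG', Set.image_union]
  -- 7. disjoint
  · rw [hmJ, hmK, Set.disjoint_left]
    rintro m ⟨s, ⟨w, hw, rfl⟩, rfl⟩ ⟨t, ⟨x, y, hxy, hteq⟩, heq⟩
    have ht : t = EK.ee v w := EK.mono_inj heq
    rw [hteq] at ht
    have h1 : EK.ee x y v = EK.ee v w v := by rw [ht]
    rw [EK.ee_apply_eq_zero (hne_v hxy).1 (hne_v hxy).2] at h1
    have h2 := EK.one_le_ee_iff.2 (Or.inl rfl : v = v ∨ w = v)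
    omega
  -- 8a. splitting function, pointwise
  · intro w hw
    rw [hmJK] at hw
    obtain ⟨s, hPms, rfl⟩ := hw
    obtain ⟨⟨haN, -⟩, hadj, hsup, -⟩ := hpick s hPms
    have hφw : φf (monomial s 1) = monomial (EK.ee v (pick s).1) 1 := by
      rw [hφf]; simp only [EK.expOf_monomial]
    have hψw : ψf (monomial s 1) = monomial (EK.ee (pick s).2.1 (pick s).2.2) 1 := by
      rw [hψf]; simp only [EK.expOf_monomial]
    refine ⟨?_, ?_, ?_⟩
    · rw [hφw, hmJ]
      exact ⟨EK.ee v (pick s).1, ⟨(pick s).1, haN, rfl⟩, rfl⟩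
    · rw [hψw, hmK]
      exact ⟨EK.ee (pick s).2.1 (pick s).2.2, ⟨_, _, hadj, rfl⟩, rfl⟩
    · refine ⟨⟨s, rfl⟩, ?_, ?_⟩
      · rintro m (rfl | rfl)
        · rw [hφw]; exact EK.mono_dvd.2 (le_trans le_sup_left hsup.le)
        · rw [hψw]; exact EK.mono_dvd.2 (le_trans le_sup_right hsup.le)
      · rintro L' ⟨u, rfl⟩ hL'
        refine EK.mono_dvd.2 ?_
        rw [← hsup]
        refine sup_le ?_ ?_
        · have := hL' _ (Set.mem_insert _ _); rw [hφw] at this; exact EK.mono_dvd.1 this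
        · have := hL' _ (Set.mem_insert_of_mem _ rfl); rw [hψw] at this
          exact EK.mono_dvd.1 this
  -- 8b. the lcm condition
  · intro S hS hSne L Lφ Lψ hL hLφ hLψ
    obtain ⟨⟨ℓ, rfl⟩, hLdvd, hLmin⟩ := hL
    obtain ⟨⟨ℓφ, rfl⟩, hLφdvd, hLφmin⟩ := hLφ
    obtain ⟨⟨ℓψ, rfl⟩, hLψdvd, hLψmin⟩ := hLψ
    have key : ∀ w ∈ S, ∃ s, w = monomial s (1:k) ∧ Pm s ∧
        φf w = monomial (EK.ee v (pick s).1) 1 ∧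
        ψf w = monomial (EK.ee (pick s).2.1 (pick s).2.2) 1 := by
      intro w hw
      have hw' := hS hw
      rw [hmJK] at hw'
      obtain ⟨s, hs, rfl⟩ := hw'
      refine ⟨s, rfl, hs, ?_, ?_⟩
      · rw [hφf]; simp only [EK.expOf_monomial]
      · rw [hψf]; simp only [EK.expOf_monomial]
    -- Lφ ∣ L
    have hφdvdL : monomial ℓφ (1:k) ∣ monomial ℓ 1 := by
      refine hLφmin _ ⟨ℓ, rfl⟩ ?_
      rintro m ⟨w, hwS, rfl⟩
      obtain ⟨s, rfl, hPms, hφw, -⟩ := key w hwS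
      rw [hφw]
      obtain ⟨-, -, hsup, -⟩ := hpick s hPms
      exact dvd_trans (EK.mono_dvd.2 (le_trans le_sup_left hsup.le)) (hLdvd _ hwS)
    -- Lψ ∣ L
    have hψdvdL : monomial ℓψ (1:k) ∣ monomial ℓ 1 := by
      refine hLψmin _ ⟨ℓ, rfl⟩ ?_
      rintro m ⟨w, hwS, rfl⟩
      obtain ⟨s, rfl, hPms, -, hψw⟩ := key w hwS
      rw [hψw]
      obtain ⟨-, -, hsup, -⟩ := hpick s hPms
      exact dvd_trans (EK.mono_dvd.2 (le_trans le_sup_right hsup.le)) (hLdvd _ hwS)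
    -- ℓ v ≥ 1
    obtain ⟨w0, hw0S⟩ := hSne
    obtain ⟨s0, hw0eq, hPms0, -, -⟩ := key w0 hw0S
    have hs0ℓ : s0 ≤ ℓ := EK.mono_dvd.1 (hw0eq ▸ hLdvd w0 hw0S)
    obtain ⟨⟨a0', ha0', ha0s⟩, -⟩ := hPms0.1
    have hℓv : 1 ≤ ℓ v :=
      le_trans (le_trans (EK.one_le_ee_iff.2 (Or.inl rfl)) (ha0s v)) (hs0ℓ v)
    -- Lψ ≠ L
    have hψne : monomial ℓψ (1:k) ≠ monomial ℓ 1 := by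
      intro heq
      have hψℓ' : monomial ℓψ (1:k) ∣ monomial (ℓ - Finsupp.single v 1) 1 := by
        refine hLψmin _ ⟨_, rfl⟩ ?_
        rintro m ⟨w, hwS, rfl⟩
        obtain ⟨s, rfl, hPms, -, hψw⟩ := key w hwS
        rw [hψw]
        obtain ⟨-, hadj, hsup, -⟩ := hpick s hPms
        refine EK.mono_dvd.2 ?_
        have hbcl : EK.ee (pick s).2.1 (pick s).2.2 ≤ ℓ :=
          le_trans (le_trans le_sup_right hsup.le) (EK.mono_dvd.1 (hLdvd _ hwS))
        intro z
        rw [Finsupp.tsub_apply, Finsupp.single_apply]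
        by_cases hzv : v = z
        · rw [← hzv, EK.ee_apply_eq_zero (hne_v hadj).1 (hne_v hadj).2]
          omega
        · rw [if_neg hzv]
          have := hbcl z
          omega
      rw [heq] at hψℓ'
      have hle := EK.mono_dvd.1 hψℓ' v
      rw [Finsupp.tsub_apply, Finsupp.single_apply, if_pos rfl] at hle
      omega
    -- Lφ ≠ L
    have hφne : monomial ℓφ (1:k) ≠ monomial ℓ 1 := by
      intro heq
      have hℓφℓ : ℓφ = ℓ := EK.mono_inj heq
      set AS : Set V := {a | ∃ w ∈ S, (pick (EK.expOf w)).1 = a} with hAS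
      have hAS_N : ∀ a ∈ AS, a ∈ G.neighborSet v := by
        rintro a ⟨w, hwS, rfl⟩
        obtain ⟨s, rfl, hPms, -, -⟩ := key w hwS
        rw [EK.expOf_monomial]
        exact (hpick s hPms).1.1
      have hdom : monomial ℓφ (1:k) ∣ monomial (ℓ.filter (fun x => x = v ∨ x ∈ AS)) 1 := by
        refine hLφmin _ ⟨_, rfl⟩ ?_
        rintro m ⟨w, hwS, rfl⟩
        obtain ⟨s, rfl, hPms, hφw, -⟩ := key w hwS
        rw [hφw]
        obtain ⟨⟨haN, -⟩, -, hsup, -⟩ := hpick s hPms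
        refine EK.mono_dvd.2 ?_
        have hva : v ≠ (pick s).1 := G.ne_of_adj haN
        have heel : EK.ee v (pick s).1 ≤ ℓ :=
          le_trans (le_trans le_sup_left hsup.le) (EK.mono_dvd.1 (hLdvd _ hwS))
        rw [EK.ee_le_iff hva] at heel ⊢
        constructor
        · rw [Finsupp.filter_apply_pos (fun x => x = v ∨ x ∈ AS) ℓ
            (show v = v ∨ v ∈ AS from Or.inl rfl)]
          exact heel.1
        · rw [Finsupp.filter_apply_pos (fun x => x = v ∨ x ∈ AS) ℓ
            (show (pick s).1 = v ∨ (pick s).1 ∈ AS from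
              Or.inr ⟨monomial s 1, hwS, by rw [EK.expOf_monomial]⟩)]
          exact heel.2
      have hsupp : ∀ z, 1 ≤ ℓ z → z = v ∨ z ∈ AS := by
        intro z hz
        by_contra hc
        have hle := EK.mono_dvd.1 hdom z
        rw [hℓφℓ, Finsupp.filter_apply_neg (fun x => x = v ∨ x ∈ AS) ℓ hc] at hle
        omega
      -- no degree-4 generators appear in S
      have hdeg3 : ∀ s, Pm s → monomial s (1:k) ∈ S →
          (pick s).2.1 = (pick s).1 ∨ (pick s).2.2 = (pick s).1 := by
        intro s hPms hwS
        obtain ⟨⟨haN, -⟩, hadj, hsup, -⟩ := hpick s hPms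
        by_contra hcon
        push_neg at hcon
        have hbv := (hne_v hadj).1
        have hsl : s ≤ ℓ := EK.mono_dvd.1 (hLdvd _ hwS)
        have h1 : 1 ≤ s (pick s).2.1 :=
          EK.one_le_of_sup_right hsup (EK.one_le_ee_iff.2 (Or.inl rfl))
        have hbN : (pick s).2.1 ∈ G.neighborSet v := by
          rcases hsupp _ (le_trans h1 (hsl _)) with h | h
          · exact absurd h hbv
          · exact hAS_N _ h
        exact fact2 s hPms _ _ _ haN hadj hsup hcon.1 hcon.2 hbN
      -- max index argument
      have hASne : AS.Nonempty := ⟨_, ⟨w0, hw0S, rfl⟩⟩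
      obtain ⟨astar, hastar, hmax⟩ := Set.exists_max_image AS idx (Set.toFinite _) hASne
      obtain ⟨wstar, hwstarS, hwstar_eq⟩ := hastar
      obtain ⟨sstar, rfl, hPmstar, -, -⟩ := key wstar hwstarS
      rw [EK.expOf_monomial] at hwstar_eq
      obtain ⟨⟨haN, -⟩, hadj, hsup, hminidx⟩ := hpick sstar hPmstar
      have hbv := (hne_v hadj).1
      have hcv := (hne_v hadj).2
      have hbcne : (pick sstar).2.1 ≠ (pick sstar).2.2 := G.ne_of_adj hadj.1
      have hsstarℓ : sstar ≤ ℓ := EK.mono_dvd.1 (hLdvd _ hwstarS)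
      have hxarg : ∀ x : V, (x = (pick sstar).2.1 ∨ x = (pick sstar).2.2) →
          x ≠ (pick sstar).1 → False := by
        intro x hx hxa
        have hxv : x ≠ v := by rcases hx with rfl | rfl; exacts [hbv, hcv]
        have h1 : 1 ≤ sstar x := by
          refine EK.one_le_of_sup_right hsup (EK.one_le_ee_iff.2 ?_)
          rcases hx with rfl | rfl
          exacts [Or.inl rfl, Or.inr rfl]
        have hxAS : x ∈ AS := by
          rcases hsupp x (le_trans h1 (hsstarℓ x)) with h | h
          · exact absurd h hxv
          · exact h
        have hxN : x ∈ G.neighborSet v := hAS_N _ hxAS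
        rcases hdeg3 sstar hPmstar hwstarS with hcase | hcase
        · -- b = a, so a ∈ {b,c}; x is valid
          have hQx : Q sstar x := by
            refine ⟨hxN, (pick sstar).2.1, (pick sstar).2.2, hadj, ?_⟩
            rw [EK.sup_edge_eq hbv hcv hx, ← EK.sup_edge_eq hbv hcv (Or.inl hcase.symm), hsup]
          have h2 := hminidx x hQx
          have h3 := hmax x hxAS
          rw [← hwstar_eq] at h3
          exact hxa (idx_inj (le_antisymm h3 h2))
        · have hQx : Q sstar x := by
            refine ⟨hxN, (pick sstar).2.1, (pick sstar).2.2, hadj, ?_⟩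
            rw [EK.sup_edge_eq hbv hcv hx, ← EK.sup_edge_eq hbv hcv (Or.inr hcase.symm), hsup]
          have h2 := hminidx x hQx
          have h3 := hmax x hxAS
          rw [← hwstar_eq] at h3
          exact hxa (idx_inj (le_antisymm h3 h2))
      rcases hdeg3 sstar hPmstar hwstarS with hcase | hcase
      · exact hxarg (pick sstar).2.2 (Or.inr rfl)
          (fun h => hbcne (hcase.trans h.symm))
      · exact hxarg (pick sstar).2.1 (Or.inl rfl)
          (fun h => hbcne (h.trans hcase.symm))
    exact ⟨⟨hφdvdL, hφne⟩, ⟨hψdvdL, hψne⟩⟩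
end

section
/- Let v be a splitting vertex of G with N(v) = {v_1,…,v_d}, and set J = (vv_1,…,vv_d) and K = I(G∖{v}). Then J ∩ K = v·I(G_(v)) + vv_1·I(G_1) + vv_2·I(G_2) + ⋯ + vv_d·I(G_d), where m·I denotes the product of the principal ideal generated by the monomial m with the ideal I. -/
open MvPolynomial

variable {V : Type*}

/-- The graph `G_(v)`: its edges are the edges of the induced subgraph of `G`
on `N(v)` together with all edges of `G` incident to some neighbor of `v` but
not incident to `v`. -/
def splitSub (G : SimpleGraph V) (v : V) : SimpleGraph V where
  Adj x y := G.Adj x y ∧ x ≠ v ∧ y ≠ v ∧ (G.Adj v x ∨ G.Adj v y)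
  symm := ⟨fun _ _ h => ⟨h.1.symm, h.2.2.1, h.2.1, h.2.2.2.symm⟩⟩
  loopless := ⟨fun x h => G.loopless.irrefl x h.1⟩

namespace Stmt5Helper

variable [DecidableEq V]

/-- exponent vector of the monomial `x_a x_b`. -/
noncomputable def e2 (a b : V) : V →₀ ℕ := Finsupp.single a 1 + Finsupp.single b 1

/-- exponent-vector set of the edge ideal of `H`. -/
def SE (H : SimpleGraph V) : Set (V →₀ ℕ) := {s | ∃ a b, H.Adj a b ∧ s = e2 a b}

lemma single_apply_zero {a x : V} (h : x ≠ a) : (Finsupp.single a 1 : V →₀ ℕ) x = 0 := by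
  simp [Finsupp.single_apply, Ne.symm h]

lemma e2_apply_zero {a b x : V} (h1 : x ≠ a) (h2 : x ≠ b) : e2 a b x = 0 := by
  simp [e2, Finsupp.single_apply, Ne.symm h1, Ne.symm h2]

lemma add_le_combine {s t m : V →₀ ℕ} (hs : s ≤ m) (ht : t ≤ m)
    (hd : ∀ x, s x = 0 ∨ t x = 0) : s + t ≤ m := by
  rw [Finsupp.le_def] at *
  intro x
  rcases hd x with h | h
  · rw [Finsupp.add_apply, h, zero_add]; exact ht x
  · rw [Finsupp.add_apply, h, add_zero]; exact hs x

lemma disj_single {a : V} {t : V →₀ ℕ} (h : t a = 0) :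
    ∀ x, (Finsupp.single a 1 : V →₀ ℕ) x = 0 ∨ t x = 0 := by
  intro x
  by_cases hx : x = a
  · subst hx; right; exact h
  · left; exact single_apply_zero hx

lemma disj_e2 {a b c d : V} (h1 : c ≠ a) (h2 : c ≠ b) (h3 : d ≠ a) (h4 : d ≠ b) :
    ∀ x, e2 a b x = 0 ∨ e2 c d x = 0 := by
  intro x
  by_cases hc : x = c
  · subst hc; left; exact e2_apply_zero h1 h2
  · by_cases hd : x = d
    · subst hd; left; exact e2_apply_zero h3 h4
    · right; exact e2_apply_zero hc hd

lemma X_mul_X_eq (k : Type*) [Field k] (a b : V) :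
    (X a * X b : MvPolynomial V k) = monomial (e2 a b) 1 := by
  simp [e2, X, monomial_mul]

lemma edgeIdeal_eq (k : Type*) [Field k] (H : SimpleGraph V) :
    edgeIdeal k H = Ideal.span ((fun s => monomial s (1 : k)) '' SE H) := by
  unfold edgeIdeal
  congr 1
  ext m
  simp only [Set.mem_image, Set.mem_setOf_eq, SE]
  constructor
  · rintro ⟨a, b, hab, rfl⟩
    exact ⟨e2 a b, ⟨a, b, hab, rfl⟩, (X_mul_X_eq k a b).symm⟩
  · rintro ⟨s, ⟨a, b, hab, rfl⟩, rfl⟩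
    exact ⟨a, b, hab, (X_mul_X_eq k a b).symm⟩

lemma span_singleton_mul (k : Type*) [Field k] (c : V →₀ ℕ) (T : Set (V →₀ ℕ)) :
    Ideal.span {(monomial c (1 : k))} * Ideal.span ((fun s => monomial s (1 : k)) '' T)
      = Ideal.span ((fun s => monomial s (1 : k)) '' ((fun s => c + s) '' T)) := by
  rw [Ideal.span_mul_span']
  congr 1
  rw [Set.singleton_mul, Set.image_image, Set.image_image]
  apply Set.image_congr'
  intro s
  rw [monomial_mul, one_mul]

end Stmt5Helper

open Stmt5Helper in
theorem stmt5 (k : Type*) [Field k] [Fintype V] [DecidableEq V]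
    (G : SimpleGraph V) (v : V)
    (hdeg : (G.neighborSet v).Nonempty)
    (hsplit : ∃ x y, (delVerts G {v}).Adj x y) :
    Ideal.span ((fun w => (X v * X w : MvPolynomial V k)) '' G.neighborSet v) ⊓
        edgeIdeal k (delVerts G {v}) =
      Ideal.span {(X v : MvPolynomial V k)} * edgeIdeal k (splitSub G v) +
        ⨆ vi ∈ G.neighborSet v,
          Ideal.span {(X v * X vi : MvPolynomial V k)} *
            edgeIdeal k (delVerts G (G.neighborSet v ∪ G.neighborSet vi)) := by
  classical
  have hXv : (X v : MvPolynomial V k) = monomial (Finsupp.single v 1) 1 := rfl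
  -- rewrite J
  have hJ : Ideal.span ((fun w => (X v * X w : MvPolynomial V k)) '' G.neighborSet v)
      = Ideal.span ((fun s => monomial s (1 : k)) '' {s | ∃ w ∈ G.neighborSet v, s = e2 v w}) := by
    congr 1
    ext m
    simp only [Set.mem_image, Set.mem_setOf_eq]
    constructor
    · rintro ⟨w, hw, rfl⟩
      exact ⟨e2 v w, ⟨w, hw, rfl⟩, (X_mul_X_eq k v w).symm⟩
    · rintro ⟨s, ⟨w, hw, rfl⟩, rfl⟩
      exact ⟨w, hw, X_mul_X_eq k v w⟩
  -- rewrite first summand of RHS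
  have hA : Ideal.span {(X v : MvPolynomial V k)} * edgeIdeal k (splitSub G v)
      = Ideal.span ((fun s => monomial s (1 : k)) ''
          ((fun s => Finsupp.single v 1 + s) '' SE (splitSub G v))) := by
    rw [hXv, edgeIdeal_eq, span_singleton_mul]
  -- rewrite second summand of RHS
  have hB : (⨆ vi ∈ G.neighborSet v,
        Ideal.span {(X v * X vi : MvPolynomial V k)} *
          edgeIdeal k (delVerts G (G.neighborSet v ∪ G.neighborSet vi)))
      = Ideal.span ((fun s => monomial s (1 : k)) ''
          ⋃ vi ∈ G.neighborSet v,
            ((fun s => e2 v vi + s) '' SE (delVerts G (G.neighborSet v ∪ G.neighborSet vi)))) := by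
    rw [Set.image_iUnion₂, Ideal.span, Submodule.span_iUnion₂]
    apply iSup_congr
    intro vi
    apply iSup_congr
    intro hvi
    rw [X_mul_X_eq, edgeIdeal_eq, span_singleton_mul]
  rw [hJ, hA, hB, edgeIdeal_eq, Submodule.add_eq_sup, ← Ideal.span_union, ← Set.image_union]
  ext f
  rw [Submodule.mem_inf, mem_ideal_span_monomial_image, mem_ideal_span_monomial_image,
    mem_ideal_span_monomial_image]
  constructor
  · rintro ⟨h1, h2⟩ m hm
    obtain ⟨s1, ⟨w, hw, rfl⟩, hle1⟩ := h1 m hm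
    obtain ⟨s2, ⟨a, b, hab, rfl⟩, hle2⟩ := h2 m hm
    rw [SimpleGraph.mem_neighborSet] at hw
    obtain ⟨hGab, hav, hbv⟩ := hab
    rw [Set.mem_singleton_iff] at hav hbv
    have hmv : Finsupp.single v 1 ≤ m := le_trans le_self_add hle1
    have hmw : Finsupp.single w 1 ≤ m := le_trans le_add_self hle1
    have hma : Finsupp.single a 1 ≤ m := le_trans (le_self_add (b := Finsupp.single b 1)) hle2
    have hmb : Finsupp.single b 1 ≤ m := le_trans (le_add_self (a := Finsupp.single b 1)) hle2
    by_cases hva : G.Adj v a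
    · refine ⟨Finsupp.single v 1 + e2 a b,
        Or.inl ⟨e2 a b, ⟨a, b, ⟨hGab, hav, hbv, Or.inl hva⟩, rfl⟩, rfl⟩, ?_⟩
      exact add_le_combine hmv hle2 (disj_single (e2_apply_zero (Ne.symm hav) (Ne.symm hbv)))
    · by_cases hvb : G.Adj v b
      · refine ⟨Finsupp.single v 1 + e2 a b,
          Or.inl ⟨e2 a b, ⟨a, b, ⟨hGab, hav, hbv, Or.inr hvb⟩, rfl⟩, rfl⟩, ?_⟩
        exact add_le_combine hmv hle2 (disj_single (e2_apply_zero (Ne.symm hav) (Ne.symm hbv)))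
      · -- a and b are not adjacent to v
        have hwv : w ≠ v := fun h => G.loopless.irrefl v (h ▸ hw)
        have haw : a ≠ w := fun h => hva (h ▸ hw)
        have hbw : b ≠ w := fun h => hvb (h ▸ hw)
        by_cases hwa : G.Adj w a
        · refine ⟨Finsupp.single v 1 + e2 w a,
            Or.inl ⟨e2 w a, ⟨w, a, ⟨hwa, hwv, hav, Or.inl hw⟩, rfl⟩, rfl⟩, ?_⟩
          refine add_le_combine hmv ?_ (disj_single (e2_apply_zero (Ne.symm hwv) (Ne.symm hav)))
          exact add_le_combine hmw hma (disj_single (single_apply_zero (Ne.symm haw)))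
        · by_cases hwb : G.Adj w b
          · refine ⟨Finsupp.single v 1 + e2 w b,
              Or.inl ⟨e2 w b, ⟨w, b, ⟨hwb, hwv, hbv, Or.inl hw⟩, rfl⟩, rfl⟩, ?_⟩
            refine add_le_combine hmv ?_ (disj_single (e2_apply_zero (Ne.symm hwv) (Ne.symm hbv)))
            exact add_le_combine hmw hmb (disj_single (single_apply_zero (Ne.symm hbw)))
          · refine ⟨e2 v w + e2 a b, Or.inr ?_, ?_⟩
            · refine Set.mem_iUnion₂.mpr ⟨w, hw, ?_⟩
              refine ⟨e2 a b, ⟨a, b, ⟨hGab, ?_, ?_⟩, rfl⟩, rfl⟩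
              · rw [Set.mem_union]
                push_neg
                exact ⟨hva, fun h => hwa h⟩
              · rw [Set.mem_union]
                push_neg
                exact ⟨hvb, fun h => hwb h⟩
            · exact add_le_combine hle1 hle2
                (disj_e2 hav haw hbv hbw)
  · intro h
    constructor <;> intro m hm <;> obtain ⟨s, hs, hle⟩ := h m hm
    · -- membership in J
      rcases hs with ⟨t, ⟨a, b, ⟨hGab, hav, hbv, hor⟩, rfl⟩, rfl⟩ |
        hmem
      · rcases hor with hva | hvb
        · refine ⟨e2 v a, ⟨a, hva, rfl⟩, le_trans ?_ hle⟩
          exact add_le_combine le_self_add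
            (le_trans (le_self_add (b := Finsupp.single b 1)) le_add_self)
            (disj_single (single_apply_zero (Ne.symm hav)))
        · refine ⟨e2 v b, ⟨b, hvb, rfl⟩, le_trans ?_ hle⟩
          exact add_le_combine le_self_add
            (le_trans (le_add_self (a := Finsupp.single b 1)) le_add_self)
            (disj_single (single_apply_zero (Ne.symm hbv)))
      · obtain ⟨w, hw, hsw⟩ := Set.mem_iUnion₂.mp hmem
        obtain ⟨t, ⟨a, b, hab, rfl⟩, rfl⟩ := hsw
        exact ⟨e2 v w, ⟨w, hw, rfl⟩, le_trans le_self_add hle⟩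
    · -- membership in K
      rcases hs with ⟨t, ⟨a, b, ⟨hGab, hav, hbv, hor⟩, rfl⟩, rfl⟩ | hmem
      · exact ⟨e2 a b, ⟨a, b, ⟨hGab, hav, hbv⟩, rfl⟩, le_trans le_add_self hle⟩
      · obtain ⟨w, hw, hsw⟩ := Set.mem_iUnion₂.mp hmem
        obtain ⟨t, ⟨a, b, ⟨hGab, hanv, hbnv⟩, rfl⟩, rfl⟩ := hsw
        rw [SimpleGraph.mem_neighborSet] at hw
        refine ⟨e2 a b, ⟨a, b, ⟨hGab, ?_, ?_⟩, rfl⟩, le_trans le_add_self hle⟩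
        · intro h
          rw [Set.mem_singleton_iff] at h
          exact hanv (Set.mem_union_right _ (h ▸ hw.symm))
        · intro h
          rw [Set.mem_singleton_iff] at h
          exact hbnv (Set.mem_union_right _ (h ▸ hw.symm))
end

section
/- Let G be a finite simple graph and let uv be an edge of G with deg u = 1. Set T = G∖{u} and H = G∖({v}∪N(v)). Then ν(G) = max{ν(T), ν(H) + 1}, where ν denotes the maximum size of a set of pairwise disconnected edges. -/
variable {V : Type*}

/-- Two edges are disconnected if they share no vertex and no endpoint of the
first is adjacent to an endpoint of the second. -/
def DisconnEdges (X : SimpleGraph V) (e f : Sym2 V) : Prop :=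
  ∀ a ∈ e, ∀ b ∈ f, a ≠ b ∧ ¬ X.Adj a b

/-- `nu X` is the maximum size of a set of pairwise disconnected edges of `X`
(`0` if `X` has no edges). -/
noncomputable def nu [Fintype V] [DecidableEq V] (X : SimpleGraph V) : ℕ :=
  sSup {n | ∃ S : Finset (Sym2 V), S.card = n ∧ (S : Set (Sym2 V)) ⊆ X.edgeSet ∧
    (S : Set (Sym2 V)).Pairwise (DisconnEdges X)}

section Aux

set_option linter.unusedSectionVars false

variable [Fintype V] [DecidableEq V]

lemma nu_bdd (X : SimpleGraph V) :
    BddAbove {n | ∃ S : Finset (Sym2 V), S.card = n ∧ (S : Set (Sym2 V)) ⊆ X.edgeSet ∧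
      (S : Set (Sym2 V)).Pairwise (DisconnEdges X)} :=
  ⟨Fintype.card (Sym2 V), fun _ ⟨S, hc, _⟩ => hc ▸ Finset.card_le_univ S⟩

lemma le_nu (X : SimpleGraph V) (S : Finset (Sym2 V))
    (h1 : (S : Set (Sym2 V)) ⊆ X.edgeSet)
    (h2 : (S : Set (Sym2 V)).Pairwise (DisconnEdges X)) : S.card ≤ nu X :=
  le_csSup (nu_bdd X) ⟨S, rfl, h1, h2⟩

lemma nu_spec (X : SimpleGraph V) :
    ∃ S : Finset (Sym2 V), S.card = nu X ∧ (S : Set (Sym2 V)) ⊆ X.edgeSet ∧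
      (S : Set (Sym2 V)).Pairwise (DisconnEdges X) := by
  have h0 : (0 : ℕ) ∈ {n | ∃ S : Finset (Sym2 V), S.card = n ∧
      (S : Set (Sym2 V)) ⊆ X.edgeSet ∧
      (S : Set (Sym2 V)).Pairwise (DisconnEdges X)} :=
    ⟨∅, by simp, by simp, by simp⟩
  exact Nat.sSup_mem ⟨0, h0⟩ (nu_bdd X)

lemma adj_of_mem_edge {X : SimpleGraph V} {f : Sym2 V} (hf : f ∈ X.edgeSet)
    {b : V} (hb : b ∈ f) : ∃ c, X.Adj b c ∧ f = s(b, c) := by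
  obtain ⟨c, rfl⟩ := Sym2.mem_iff_exists.mp hb
  exact ⟨c, hf, rfl⟩

lemma sym2_decomp (f : Sym2 V) : ∃ x y, f = s(x, y) := by
  induction f using Sym2.ind with
  | _ x y => exact ⟨x, y, rfl⟩

lemma delVerts_le (G : SimpleGraph V) (S : Set V) : delVerts G S ≤ G :=
  fun _ _ h => h.1

end Aux

/-- if `uv` is an edge of `G` with `deg u = 1`, `T = G \ {u}` and
`H = G \ ({v} ∪ N(v))`, then `ν(G) = max {ν(T), ν(H) + 1}`. -/
theorem stmt8 [Fintype V] [DecidableEq V] (G : SimpleGraph V) (u v : V)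
    (huv : G.Adj u v) (hdeg : (G.neighborSet u).ncard = 1) :
    nu G = max (nu (delVerts G {u}))
        (nu (delVerts G (insert v (G.neighborSet v))) + 1) := by
  set T := delVerts G {u} with hT
  set H := delVerts G (insert v (G.neighborSet v)) with hH
  have hNu : G.neighborSet u = {v} := by
    obtain ⟨a, ha⟩ := Set.ncard_eq_one.mp hdeg
    have hv : v ∈ G.neighborSet u := huv
    rw [ha] at hv ⊢
    rw [Set.mem_singleton_iff.mp hv]
  have hadj_u : ∀ w, G.Adj u w → w = v := by
    intro w hw
    have : w ∈ G.neighborSet u := hw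
    rw [hNu] at this; exact this
  apply le_antisymm
  · -- nu G ≤ max
    obtain ⟨M, hMc, hMe, hMp⟩ := nu_spec G
    by_cases hu : ∃ e ∈ M, u ∈ e
    · -- an edge of M contains u, it must be s(u,v)
      obtain ⟨e, heM, hue⟩ := hu
      obtain ⟨w, hw, hew⟩ := adj_of_mem_edge (hMe heM) hue
      rw [hadj_u w hw] at hew
      have hue' : u ∈ e := by rw [hew]; simp
      have hve : v ∈ e := by rw [hew]; simp
      have key : ∀ f ∈ M.erase e, ∀ b ∈ f, b ∉ insert v (G.neighborSet v) := by
        intro f hf b hb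
        have hfe : f ≠ e := Finset.ne_of_mem_erase hf
        have hd := hMp heM (Finset.mem_coe.mpr (Finset.mem_of_mem_erase hf)) (Ne.symm hfe)
        have h2 := hd v hve b hb
        intro hmem
        rcases Set.mem_insert_iff.mp hmem with h | h
        · exact h2.1 h.symm
        · exact h2.2 h
      have hsub : ((M.erase e : Finset (Sym2 V)) : Set (Sym2 V)) ⊆ H.edgeSet := by
        intro f hf
        obtain ⟨x, y, rfl⟩ := sym2_decomp f
        have hadj : G.Adj x y := hMe (Finset.mem_coe.mpr (Finset.mem_of_mem_erase hf))
        rw [SimpleGraph.mem_edgeSet]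
        exact ⟨hadj, key _ hf x (by simp), key _ hf y (by simp)⟩
      have hpw : ((M.erase e : Finset (Sym2 V)) : Set (Sym2 V)).Pairwise (DisconnEdges H) := by
        intro f hf g hg hfg a ha b hb
        have := hMp (Finset.mem_coe.mpr (Finset.mem_of_mem_erase hf))
          (Finset.mem_coe.mpr (Finset.mem_of_mem_erase hg)) hfg a ha b hb
        exact ⟨this.1, fun h => this.2 h.1⟩
      have hle : (M.erase e).card ≤ nu H := le_nu H _ hsub hpw
      have hcard : (M.erase e).card = M.card - 1 := Finset.card_erase_of_mem heM
      have hpos : 1 ≤ M.card := Finset.card_pos.mpr ⟨e, heM⟩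
      have : nu G ≤ nu H + 1 := by omega
      exact le_trans this (le_max_right _ _)
    · -- no edge of M contains u
      push_neg at hu
      have hsub : (M : Set (Sym2 V)) ⊆ T.edgeSet := by
        intro f hf
        obtain ⟨x, y, rfl⟩ := sym2_decomp f
        have hadj : G.Adj x y := hMe hf
        rw [SimpleGraph.mem_edgeSet]
        refine ⟨hadj, ?_, ?_⟩
        · intro h; exact hu _ hf (by simp [Set.mem_singleton_iff.mp h])
        · intro h; exact hu _ hf (by simp [Set.mem_singleton_iff.mp h])
      have hpw : (M : Set (Sym2 V)).Pairwise (DisconnEdges T) := by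
        intro f hf g hg hfg a ha b hb
        have := hMp hf hg hfg a ha b hb
        exact ⟨this.1, fun h => this.2 h.1⟩
      have : nu G ≤ nu T := hMc ▸ le_nu T M hsub hpw
      exact le_trans this (le_max_left _ _)
  · -- max ≤ nu G
    apply max_le
    · -- nu T ≤ nu G
      obtain ⟨M, hMc, hMe, hMp⟩ := nu_spec T
      have hnu : ∀ f ∈ M, ∀ b ∈ f, b ≠ u := by
        intro f hf b hb
        obtain ⟨c, hc, -⟩ := adj_of_mem_edge (hMe hf) hb
        intro h; exact hc.2.1 (by simp [h])
      have hsub : (M : Set (Sym2 V)) ⊆ G.edgeSet :=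
        fun f hf => SimpleGraph.edgeSet_mono (delVerts_le G {u}) (hMe hf)
      have hpw : (M : Set (Sym2 V)).Pairwise (DisconnEdges G) := by
        intro f hf g hg hfg a ha b hb
        have hd := hMp hf hg hfg a ha b hb
        refine ⟨hd.1, fun h => hd.2 ⟨h, ?_, ?_⟩⟩
        · simpa using hnu f hf a ha
        · simpa using hnu g hg b hb
      exact hMc ▸ le_nu G M hsub hpw
    · -- nu H + 1 ≤ nu G
      obtain ⟨M, hMc, hMe, hMp⟩ := nu_spec H
      have hnv : ∀ f ∈ M, ∀ b ∈ f, b ∉ insert v (G.neighborSet v) := by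
        intro f hf b hb
        obtain ⟨c, hc, -⟩ := adj_of_mem_edge (hMe hf) hb
        exact hc.2.1
      have hnu : ∀ f ∈ M, ∀ b ∈ f, b ≠ u := by
        intro f hf b hb h
        obtain ⟨c, hc, -⟩ := adj_of_mem_edge (hMe hf) hb
        have : c = v := hadj_u c (h ▸ hc.1)
        exact hc.2.2 (by simp [this])
      have hnotmem : s(u, v) ∉ M := by
        intro h
        exact hnv _ h v (by simp) (by simp)
      have hcard : (insert s(u, v) M).card = M.card + 1 := Finset.card_insert_of_notMem hnotmem
      have hdisc : ∀ f ∈ (M : Set (Sym2 V)), DisconnEdges G s(u, v) f := by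
        intro f hf a ha b hb
        have hbv : b ∉ insert v (G.neighborSet v) := hnv f hf b hb
        have hbu : b ≠ u := hnu f hf b hb
        simp only [Set.mem_insert_iff, SimpleGraph.mem_neighborSet, not_or] at hbv
        rcases Sym2.mem_iff.mp ha with rfl | rfl
        · refine ⟨hbu.symm, fun h => hbv.2 ?_⟩
          rw [hadj_u b h] at hbv
          exact absurd rfl hbv.1
        · exact ⟨fun h => hbv.1 h.symm, hbv.2⟩
      have hsub : ((insert s(u, v) M : Finset (Sym2 V)) : Set (Sym2 V)) ⊆ G.edgeSet := by
        intro f hf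
        rw [Finset.coe_insert, Set.mem_insert_iff] at hf
        rcases hf with rfl | hf
        · rw [SimpleGraph.mem_edgeSet]; exact huv
        · exact SimpleGraph.edgeSet_mono (delVerts_le G _) (hMe hf)
      have hpw : ((insert s(u, v) M : Finset (Sym2 V)) : Set (Sym2 V)).Pairwise
          (DisconnEdges G) := by
        rw [Finset.coe_insert]
        apply Set.Pairwise.insert
        · intro f hf g hg hfg a ha b hb
          have hd := hMp hf hg hfg a ha b hb
          refine ⟨hd.1, fun h => hd.2 ⟨h, hnv f hf a ha, hnv g hg b hb⟩⟩
        · intro f hf hfe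
          refine ⟨hdisc f hf, fun a ha b hb => ?_⟩
          have := hdisc f hf b hb a ha
          exact ⟨this.1.symm, fun h => this.2 h.symm⟩
      have : M.card + 1 ≤ nu G := hcard ▸ le_nu G _ hsub hpw
      omega
end
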